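/- Define q : ℍ → ℝ by q(w) = (4·Im(w)/(π·|w|⁴)) · (Im(w) + Re(w)·(π/2 − arg(w))), where arg denotes the principal argument (taking values in (0, π) on ℍ), and define ĝ : ℝ → ℝ by ĝ(θ) = (4/(3π)) · (θ(π − θ) + (π/2 − θ)·sin θ·cos θ + 2·sin²θ). Suppose g : ℍ → ℝ is bounded, twice continuously differentiable on ℍ, satisfies −Δg(z) = (4/3)·q(z) for all z ∈ ℍ (Δ the Euclidean Laplacian on ℍ ⊆ ℝ²), and satisfies g(z) → 0 as z → x with z ∈ ℍ, for every x ∈ ℝ with x ≠ 0. Then g(z) = ĝ(arg z) for all z ∈ ℍ. -/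

import Mathlib

set_option maxHeartbeats 1000000

open Real Filter
open Topology

/-- The Euclidean Laplacian `Δf = ∂²f/∂x² + ∂²f/∂y²` of a function `f : ℂ → ℝ` of the
real coordinates `(Re z, Im z)`. -/
noncomputable def planeLaplacian (f : ℂ → ℝ) (z : ℂ) : ℝ :=
  deriv (deriv (fun x : ℝ => f ((x : ℂ) + z.im * Complex.I))) z.re +
    deriv (deriv (fun y : ℝ => f ((z.re : ℂ) + y * Complex.I))) z.im

/-- The density `q(ℍ; 0, ∞; ·)` of Lemma 4.2:
`q(w) = (4 Im w/(π|w|⁴)) (Im w + Re w (π/2 − arg w))`. -/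
noncomputable def qDensity (w : ℂ) : ℝ :=
  4 * w.im / (π * ‖w‖ ^ 4) * (w.im + w.re * (π / 2 - Complex.arg w))

/-- The explicit solution `ĝ(θ) = (4/(3π))(θ(π−θ) + (π/2−θ) sin θ cos θ + 2 sin²θ)` of
equation (1.11)/(4.6). -/
noncomputable def ghat (θ : ℝ) : ℝ :=
  4 / (3 * π) * (θ * (π - θ) + (π / 2 - θ) * sin θ * cos θ + 2 * sin θ ^ 2)



/-! Coordinate versions of the explicit functions. -/

noncomputable def GfR (x y : ℝ) : ℝ :=
  4/(3*π) * (π^2/4 - arctan (x/y)^2 + arctan (x/y)*x*y/(x^2+y^2) + 2*y^2/(x^2+y^2))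

noncomputable def GX (x y : ℝ) : ℝ :=
  -(4/(3*π)) * (y * (arctan (x/y) * (3*x^2+y^2) + 3*x*y)) / ((x^2+y^2)^2)

noncomputable def GY (x y : ℝ) : ℝ :=
  4/(3*π) * (x * (arctan (x/y) * (3*x^2+y^2) + 3*x*y)) / ((x^2+y^2)^2)

noncomputable def GXX (x y : ℝ) : ℝ :=
  -(4/(3*π)) * (y*(y*(4*y^2-6*x^2) + 2*x*arctan (x/y)*(y^2-3*x^2))) / ((x^2+y^2)^3)

noncomputable def GYY (x y : ℝ) : ℝ :=
  -(8/(3*π)) * (x*(5*x*y^2 + y*arctan (x/y)*(5*x^2+y^2))) / ((x^2+y^2)^3)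

lemma hasDerivAt_arctan_div {y : ℝ} (hy : y ≠ 0) (x : ℝ) :
    HasDerivAt (fun x : ℝ => arctan (x / y)) (y / (x^2+y^2)) x := by
  have h := (Real.hasDerivAt_arctan (x/y)).comp x ((hasDerivAt_id x).div_const y)
  have hs : x^2+y^2 ≠ 0 := by positivity
  refine h.congr_deriv ?_
  field_simp
  ring

lemma hasDerivAt_arctan_div_y {x y : ℝ} (hy : y ≠ 0) :
    HasDerivAt (fun y : ℝ => arctan (x / y)) (-x / (x^2+y^2)) y := by
  have hdiv : HasDerivAt (fun t : ℝ => x / t) (-x / y^2) y := by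
    have h := (hasDerivAt_const y x).div (hasDerivAt_id y) hy
    refine h.congr_deriv ?_
    simp only [id]; ring
  have h := (Real.hasDerivAt_arctan (x/y)).comp y hdiv
  have hs : x^2+y^2 ≠ 0 := by positivity
  refine h.congr_deriv ?_
  field_simp
  ring

lemma hasDerivAt_sq_add {y : ℝ} (x : ℝ) :
    HasDerivAt (fun x : ℝ => x^2+y^2) (2*x) x := by
  simpa using (hasDerivAt_pow 2 x).add_const (y^2)

lemma hasDerivAt_sq_add_y {x : ℝ} (y : ℝ) :
    HasDerivAt (fun y : ℝ => x^2+y^2) (2*y) y := by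
  simpa using (hasDerivAt_pow 2 y).const_add (x^2)

lemma hasDerivAt_GfR_x {y : ℝ} (hy : 0 < y) (x : ℝ) :
    HasDerivAt (fun x : ℝ => GfR x y) (GX x y) x := by
  have hy0 : y ≠ 0 := hy.ne'
  have hs : x^2+y^2 ≠ 0 := by positivity
  have hA := hasDerivAt_arctan_div hy0 x
  have hS := hasDerivAt_sq_add (y := y) x
  have h2 : HasDerivAt (fun x : ℝ => arctan (x/y)^2)
      (2 * arctan (x/y) ^ 1 * (y/(x^2+y^2))) x := by
    simpa using hA.fun_pow 2
  have h3 : HasDerivAt (fun x : ℝ => arctan (x/y)*x*y/(x^2+y^2))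
      (((y/(x^2+y^2)*x + arctan (x/y)*1)*y*(x^2+y^2) - arctan (x/y)*x*y*(2*x))/(x^2+y^2)^2) x :=
    ((hA.mul (hasDerivAt_id x)).mul_const y).div hS hs
  have h4 : HasDerivAt (fun x : ℝ => 2*y^2/(x^2+y^2))
      ((0*(x^2+y^2) - 2*y^2*(2*x))/(x^2+y^2)^2) x :=
    (hasDerivAt_const x (2*y^2)).div hS hs
  have h := ((((hasDerivAt_const x (π^2/4)).sub h2).add h3).add h4).const_mul (4/(3*π))
  refine h.congr_deriv ?_
  rw [GX]
  have hπ : (3:ℝ)*π ≠ 0 := by positivity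
  field_simp
  ring

lemma hasDerivAt_GX_x {y : ℝ} (hy : 0 < y) (x : ℝ) :
    HasDerivAt (fun x : ℝ => GX x y) (GXX x y) x := by
  have hy0 : y ≠ 0 := hy.ne'
  have hs : x^2+y^2 ≠ 0 := by positivity
  have hs2 : (x^2+y^2)^2 ≠ 0 := by positivity
  have hA := hasDerivAt_arctan_div hy0 x
  have hS := hasDerivAt_sq_add (y := y) x
  have h3s : HasDerivAt (fun x : ℝ => 3*x^2+y^2) (3*(2*x)) x := by
    simpa [mul_assoc, mul_comm, mul_left_comm] using
      (((hasDerivAt_pow 2 x).const_mul 3).add_const (y^2))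
  have hN : HasDerivAt (fun x : ℝ => y * (arctan (x/y) * (3*x^2+y^2) + 3*x*y))
      (((y/(x^2+y^2)) * (3*x^2+y^2) + arctan (x/y) * (3*(2*x)) + 3*1*y) * y) x := by
    have hprod := hA.mul h3s
    have hlin : HasDerivAt (fun x : ℝ => 3*x*y) (3*1*y) x :=
      ((hasDerivAt_id x).const_mul 3).mul_const y
    have := (hprod.add hlin).const_mul y
    refine this.congr_deriv ?_
    ring
  have hS2 : HasDerivAt (fun x : ℝ => (x^2+y^2)^2) (2*(x^2+y^2)^1*(2*x)) x := hS.pow 2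
  have h := (hN.const_mul (-(4/(3*π)))).div hS2 hs2
  refine h.congr_deriv ?_
  rw [GXX]
  have hπ : (3:ℝ)*π ≠ 0 := by positivity
  field_simp
  ring

lemma hasDerivAt_GfR_y {x y : ℝ} (hy : 0 < y) :
    HasDerivAt (fun y : ℝ => GfR x y) (GY x y) y := by
  have hy0 : y ≠ 0 := hy.ne'
  have hs : x^2+y^2 ≠ 0 := by positivity
  have hA := hasDerivAt_arctan_div_y (x := x) hy0
  have hS := hasDerivAt_sq_add_y (x := x) y
  have h2 : HasDerivAt (fun y : ℝ => arctan (x/y)^2)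
      (2 * arctan (x/y) ^ 1 * (-x/(x^2+y^2))) y := by
    simpa using hA.fun_pow 2
  have h3' : HasDerivAt (fun y : ℝ => arctan (x/y)*x*y/(x^2+y^2))
      ((((-x/(x^2+y^2)*x)*y + arctan (x/y)*x*1)*(x^2+y^2) - arctan (x/y)*x*y*(2*y))
        / (x^2+y^2)^2) y :=
    (((hA.mul_const x).mul (hasDerivAt_id y)).div hS hs)
  have h4 : HasDerivAt (fun y : ℝ => 2*y^2/(x^2+y^2))
      ((2*(2*y^1)*(x^2+y^2) - 2*y^2*(2*y))/(x^2+y^2)^2) y :=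
    ((hasDerivAt_pow 2 y).const_mul 2).div hS hs
  have h := ((((hasDerivAt_const y (π^2/4)).sub h2).add h3').add h4).const_mul (4/(3*π))
  refine h.congr_deriv ?_
  rw [GY]
  have hπ : (3:ℝ)*π ≠ 0 := by positivity
  field_simp
  ring

lemma hasDerivAt_GY_y {x y : ℝ} (hy : 0 < y) :
    HasDerivAt (fun y : ℝ => GY x y) (GYY x y) y := by
  have hy0 : y ≠ 0 := hy.ne'
  have hs : x^2+y^2 ≠ 0 := by positivity
  have hs2 : (x^2+y^2)^2 ≠ 0 := by positivity
  have hA := hasDerivAt_arctan_div_y (x := x) hy0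
  have hS := hasDerivAt_sq_add_y (x := x) y
  have h3s : HasDerivAt (fun y : ℝ => 3*x^2+y^2) (2*y) y := by
    simpa using ((hasDerivAt_pow 2 y).const_add (3*x^2))
  have hN : HasDerivAt (fun y : ℝ => x * (arctan (x/y) * (3*x^2+y^2) + 3*x*y))
      (((-x/(x^2+y^2)) * (3*x^2+y^2) + arctan (x/y) * (2*y) + 3*x*1) * x) y := by
    have hprod := hA.mul h3s
    have hlin : HasDerivAt (fun y : ℝ => 3*x*y) (3*x*1) y := (hasDerivAt_id y).const_mul (3*x)
    have := (hprod.add hlin).const_mul x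
    refine this.congr_deriv ?_
    ring
  have hS2 : HasDerivAt (fun y : ℝ => (x^2+y^2)^2) (2*(x^2+y^2)^1*(2*y)) y := hS.pow 2
  have h := (hN.const_mul (4/(3*π))).div hS2 hs2
  refine h.congr_deriv ?_
  rw [GYY]
  have hπ : (3:ℝ)*π ≠ 0 := by positivity
  field_simp
  ring

lemma lap_G {x y : ℝ} (hy : 0 < y) :
    GXX x y + GYY x y = -(16/(3*π)) * (y*(y + x*arctan (x/y))) / ((x^2+y^2)^2) := by
  have hs : x^2+y^2 ≠ 0 := by positivity
  have hπ : (3:ℝ)*π ≠ 0 := by positivity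
  rw [GXX, GYY]
  field_simp
  ring

/-! Barrier functions. -/

noncomputable def b1R (x y : ℝ) : ℝ := Real.log (x^2+(y+1)^2)/2
noncomputable def b0R (x y : ℝ) : ℝ := Real.log (x^2+(y+1)^2)/2 - Real.log (x^2+y^2)/2

lemma hasDerivAt_log_sq_half {c : ℝ} (x : ℝ) (h : x^2 + c ≠ 0) :
    HasDerivAt (fun x : ℝ => Real.log (x^2+c)/2) (x/(x^2+c)) x := by
  have hS : HasDerivAt (fun x : ℝ => x^2+c) (2*x) x := by
    simpa using (hasDerivAt_pow 2 x).add_const c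
  have h2 := ((Real.hasDerivAt_log h).comp x hS).div_const 2
  refine h2.congr_deriv ?_
  field_simp

lemma hasDerivAt_inv_quad {c : ℝ} (x : ℝ) (h : x^2 + c ≠ 0) :
    HasDerivAt (fun x : ℝ => x/(x^2+c)) ((c - x^2)/(x^2+c)^2) x := by
  have hS : HasDerivAt (fun x : ℝ => x^2+c) (2*x) x := by
    simpa using (hasDerivAt_pow 2 x).add_const c
  have h2 := (hasDerivAt_id x).div hS h
  refine h2.congr_deriv ?_
  simp only [id]
  field_simp
  ring

lemma hasDerivAt_log_shift_y {x y : ℝ} (h : x^2 + (y+1)^2 ≠ 0) :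
    HasDerivAt (fun y : ℝ => Real.log (x^2+(y+1)^2)/2) ((y+1)/(x^2+(y+1)^2)) y := by
  have hS : HasDerivAt (fun y : ℝ => x^2+(y+1)^2) (2*(y+1)) y := by
    have := (((hasDerivAt_id y).add_const 1).pow 2).const_add (x^2)
    simpa [mul_comm, mul_assoc, mul_left_comm] using this
  have h2 := ((Real.hasDerivAt_log h).comp y hS).div_const 2
  refine h2.congr_deriv ?_
  field_simp

lemma hasDerivAt_shift_quad_y {x y : ℝ} (h : x^2 + (y+1)^2 ≠ 0) :
    HasDerivAt (fun y : ℝ => (y+1)/(x^2+(y+1)^2)) ((x^2 - (y+1)^2)/(x^2+(y+1)^2)^2) y := by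
  have hS : HasDerivAt (fun y : ℝ => x^2+(y+1)^2) (2*(y+1)) y := by
    have := (((hasDerivAt_id y).add_const 1).pow 2).const_add (x^2)
    simpa [mul_comm, mul_assoc, mul_left_comm] using this
  have h2 := ((hasDerivAt_id y).add_const 1).div hS h
  refine h2.congr_deriv ?_
  simp only [id]
  field_simp
  ring

lemma hasDerivAt_log_sq_half_y {x y : ℝ} (h : x^2 + y^2 ≠ 0) :
    HasDerivAt (fun y : ℝ => Real.log (x^2+y^2)/2) (y/(x^2+y^2)) y := by
  have hS := hasDerivAt_sq_add_y (x := x) y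
  have h2 := ((Real.hasDerivAt_log h).comp y hS).div_const 2
  refine h2.congr_deriv ?_
  field_simp

lemma hasDerivAt_quad_y {x y : ℝ} (h : x^2 + y^2 ≠ 0) :
    HasDerivAt (fun y : ℝ => y/(x^2+y^2)) ((x^2 - y^2)/(x^2+y^2)^2) y := by
  have hS := hasDerivAt_sq_add_y (x := x) y
  have h2 := (hasDerivAt_id y).div hS h
  refine h2.congr_deriv ?_
  simp only [id]
  field_simp
  ring

/-! arg identities -/


lemma arg_mem_Ioo {z : ℂ} (hz : 0 < z.im) : 0 < Complex.arg z ∧ Complex.arg z < π := by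
  have habs : |z.re| < ‖z‖ := Complex.abs_re_lt_norm.2 (ne_of_gt hz)
  have habs0 : 0 < ‖z‖ := lt_of_le_of_lt (abs_nonneg _) habs
  rw [Complex.arg_of_im_pos hz]
  constructor
  · rw [Real.arccos_pos]
    rw [div_lt_one habs0]
    exact lt_of_abs_lt habs
  · have h1 : -1 < z.re / ‖z‖ := by
      rw [lt_div_iff₀ habs0]
      have := neg_lt_of_abs_lt habs
      linarith
    have h2 : -(π/2) < Real.arcsin (z.re / ‖z‖) := Real.neg_pi_div_two_lt_arcsin.2 h1
    rw [Real.arccos]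
    linarith
lemma arg_eq_arctan {z : ℂ} (hz : 0 < z.im) :
    Complex.arg z = π/2 - arctan (z.re / z.im) := by
  obtain ⟨h1, h2⟩ := arg_mem_Ioo hz
  have hz0 : z ≠ 0 := by
    intro h
    rw [h] at hz
    simp at hz
  have habs0 : 0 < ‖z‖ := norm_pos_iff.mpr hz0
  have hsin : Real.sin (Complex.arg z) = z.im / ‖z‖ := Complex.sin_arg z
  have hcos : Real.cos (Complex.arg z) = z.re / ‖z‖ := Complex.cos_arg hz0
  have hsinpos : 0 < Real.sin (Complex.arg z) := by
    rw [hsin]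
    positivity
  have htan : Real.tan (π/2 - Complex.arg z) = z.re / z.im := by
    rw [Real.tan_eq_sin_div_cos, Real.sin_pi_div_two_sub, Real.cos_pi_div_two_sub, hsin, hcos]
    field_simp
  have := Real.arctan_tan (x := π/2 - Complex.arg z) (by linarith) (by linarith)
  rw [htan] at this
  linarith [this]

lemma ghat_arg_eq_GfR {z : ℂ} (hz : 0 < z.im) : ghat (Complex.arg z) = GfR z.re z.im := by
  have hz0 : z ≠ 0 := by
    intro h; rw [h] at hz; simp at hz
  have habs0 : 0 < ‖z‖ := norm_pos_iff.mpr hz0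
  have hsq : ‖z‖ ^ 2 = z.re^2 + z.im^2 := by
    rw [Complex.sq_norm, Complex.normSq_apply]; ring
  have hs : z.re^2 + z.im^2 ≠ 0 := by positivity
  have hsin : Real.sin (Complex.arg z) = z.im / ‖z‖ := Complex.sin_arg z
  have hcos : Real.cos (Complex.arg z) = z.re / ‖z‖ := Complex.cos_arg hz0
  have harg := arg_eq_arctan hz
  have habs_ne : ‖z‖ ≠ 0 := habs0.ne'
  have hrr : ‖z‖ * ‖z‖ = z.re^2 + z.im^2 := by
    rw [← hsq]; ring
  have hsc : Real.sin (Complex.arg z) * Real.cos (Complex.arg z)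
      = z.re*z.im/(z.re^2+z.im^2) := by
    rw [hsin, hcos, div_mul_div_comm, hrr]
    ring
  have hs2 : Real.sin (Complex.arg z)^2 = z.im^2/(z.re^2+z.im^2) := by
    rw [hsin, div_pow, hsq]
  have expand : Complex.arg z * (π - Complex.arg z)
      + (π / 2 - Complex.arg z) * Real.sin (Complex.arg z) * Real.cos (Complex.arg z)
      + 2 * Real.sin (Complex.arg z) ^ 2
      = Complex.arg z * (π - Complex.arg z)
      + (π / 2 - Complex.arg z) * (Real.sin (Complex.arg z) * Real.cos (Complex.arg z))
      + 2 * Real.sin (Complex.arg z) ^ 2 := by ring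
  rw [ghat, GfR, expand, hsc, hs2, harg]
  have hπ : (3:ℝ)*π ≠ 0 := by positivity
  field_simp
  ring


lemma lapG_eq_neg_q {z : ℂ} (hz : 0 < z.im) :
    GXX z.re z.im + GYY z.re z.im = -(4/3 * qDensity z) := by
  have hz0 : z ≠ 0 := by intro h; rw [h] at hz; simp at hz
  have hs : z.re^2 + z.im^2 ≠ 0 := by positivity
  have habs4 : ‖z‖ ^ 4 = (z.re^2+z.im^2)^2 := by
    rw [show (4:ℕ) = 2*2 from rfl, pow_mul, Complex.sq_norm, Complex.normSq_apply]
    ring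
  rw [lap_G hz, qDensity, arg_eq_arctan hz, habs4]
  have hπ : π ≠ 0 := Real.pi_ne_zero
  field_simp
  ring

/-! Nonnegativity and lower bounds for barriers. -/

lemma log_abs_eq {z : ℂ} (hz : 0 < z.im) :
    Real.log (‖z‖) = Real.log (z.re^2+z.im^2)/2 := by
  have h1 : ‖z‖ = Real.sqrt (z.re^2+z.im^2) := by
    rw [Complex.norm_def, Complex.normSq_apply]
    ring_nf
  rw [h1, Real.log_sqrt (by positivity)]

lemma b1_nonneg {z : ℂ} (hz : 0 < z.im) : 0 ≤ b1R z.re z.im := by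
  rw [b1R]
  have h1 : (1:ℝ) ≤ z.re^2 + (z.im+1)^2 := by nlinarith
  have := Real.log_nonneg h1
  linarith

lemma b0_nonneg {z : ℂ} (hz : 0 < z.im) : 0 ≤ b0R z.re z.im := by
  rw [b0R]
  have h2 : (0:ℝ) < z.re^2 + z.im^2 := by positivity
  have h1 : z.re^2 + z.im^2 ≤ z.re^2 + (z.im+1)^2 := by nlinarith
  have := Real.log_le_log h2 h1
  linarith

lemma b1_ge_log_abs {z : ℂ} (hz : 0 < z.im) : Real.log (‖z‖) ≤ b1R z.re z.im := by
  rw [b1R, log_abs_eq hz]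
  have h2 : (0:ℝ) < z.re^2 + z.im^2 := by positivity
  have h1 : z.re^2 + z.im^2 ≤ z.re^2 + (z.im+1)^2 := by nlinarith
  have := Real.log_le_log h2 h1
  linarith

lemma b0_ge_neg_log_abs {z : ℂ} (hz : 0 < z.im) :
    -Real.log (‖z‖) ≤ b0R z.re z.im := by
  rw [b0R, log_abs_eq hz]
  have h1 : (1:ℝ) ≤ z.re^2 + (z.im+1)^2 := by nlinarith
  have := Real.log_nonneg h1
  linarith

/-! Boundedness of `GfR` via `ghat`. -/

noncomputable def CGbound : ℝ := 4/(3*π) * (2*π^2 + 3*π/2 + 2)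

lemma abs_ghat_le {θ : ℝ} (h : |θ| ≤ π) : |ghat θ| ≤ CGbound := by
  obtain ⟨hθ1, hθ2⟩ := abs_le.1 h
  have hq : |θ * (π - θ)| ≤ 2*π^2 := by
    rw [abs_mul]
    have h1 : |θ| ≤ π := h
    have h2 : |π - θ| ≤ 2*π := by
      rw [abs_le]
      constructor <;> nlinarith [Real.pi_pos]
    nlinarith [abs_nonneg θ, abs_nonneg (π - θ), Real.pi_pos]
  have hp : |(π/2 - θ) * Real.sin θ * Real.cos θ| ≤ 3*π/2 := by
    rw [abs_mul, abs_mul]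
    have h1 : |π/2 - θ| ≤ 3*π/2 := by
      rw [abs_le]
      constructor <;> nlinarith [Real.pi_pos]
    have h2 := Real.abs_sin_le_one θ
    have h3 := Real.abs_cos_le_one θ
    have h4 : |π/2 - θ| * |Real.sin θ| ≤ 3*π/2 * 1 :=
      mul_le_mul h1 h2 (abs_nonneg _) (by positivity)
    have h5 : |π/2 - θ| * |Real.sin θ| * |Real.cos θ| ≤ (3*π/2 * 1) * 1 :=
      mul_le_mul h4 h3 (abs_nonneg _) (by positivity)
    linarith
  have hr : |2 * Real.sin θ ^ 2| ≤ 2 := by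
    rw [abs_of_nonneg (by positivity)]
    nlinarith [Real.sin_sq_le_one θ]
  rw [ghat, CGbound, abs_mul, abs_of_pos (show (0:ℝ) < 4/(3*π) by positivity)]
  have hsum : |θ * (π - θ) + (π / 2 - θ) * Real.sin θ * Real.cos θ + 2 * Real.sin θ ^ 2|
      ≤ 2*π^2 + 3*π/2 + 2 := by
    calc |θ * (π - θ) + (π / 2 - θ) * Real.sin θ * Real.cos θ + 2 * Real.sin θ ^ 2|
        ≤ |θ * (π - θ) + (π / 2 - θ) * Real.sin θ * Real.cos θ| + |2 * Real.sin θ ^ 2| :=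
          abs_add_le _ _
      _ ≤ (|θ * (π - θ)| + |(π / 2 - θ) * Real.sin θ * Real.cos θ|) + |2 * Real.sin θ ^ 2| := by
          have := abs_add_le (θ * (π - θ)) ((π / 2 - θ) * Real.sin θ * Real.cos θ)
          linarith
      _ ≤ 2*π^2 + 3*π/2 + 2 := by linarith
  have hc : (0:ℝ) < 4/(3*π) := by positivity
  calc 4/(3*π) * |θ * (π - θ) + (π / 2 - θ) * Real.sin θ * Real.cos θ + 2 * Real.sin θ ^ 2|
      ≤ 4/(3*π) * (2*π^2 + 3*π/2 + 2) := by
        exact mul_le_mul_of_nonneg_left hsum hc.le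

lemma abs_GfR_le {z : ℂ} (hz : 0 < z.im) : |GfR z.re z.im| ≤ CGbound := by
  rw [← ghat_arg_eq_GfR hz]
  exact abs_ghat_le (Complex.abs_arg_le_pi z)

lemma CGbound_nonneg : 0 ≤ CGbound := by
  rw [CGbound]
  positivity

/-! Continuity. -/

lemma continuousAt_GfR {z : ℂ} (hz : 0 < z.im) :
    ContinuousAt (fun w : ℂ => GfR w.re w.im) z := by
  have hs : z.re^2 + z.im^2 ≠ 0 := by positivity
  have hre : ContinuousAt (fun w : ℂ => w.re) z := Complex.continuous_re.continuousAt
  have him : ContinuousAt (fun w : ℂ => w.im) z := Complex.continuous_im.continuousAt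
  have hA : ContinuousAt (fun w : ℂ => arctan (w.re / w.im)) z :=
    Real.continuous_arctan.continuousAt.comp (hre.div him hz.ne')
  have hS : ContinuousAt (fun w : ℂ => w.re^2 + w.im^2) z := by
    exact ((hre.pow 2).add (him.pow 2))
  unfold GfR
  exact ((((continuousAt_const.sub (hA.pow 2)).add
    (((hA.mul hre).mul him).div hS hs)).add
    ((continuousAt_const.mul (him.pow 2)).div hS hs)).const_mul _)

lemma continuousAt_b0b1 {z : ℂ} (hz : 0 < z.im) :
    ContinuousAt (fun w : ℂ => b0R w.re w.im + b1R w.re w.im) z := by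
  have hs : z.re^2 + z.im^2 ≠ 0 := by positivity
  have ht : z.re^2 + (z.im+1)^2 ≠ 0 := by positivity
  have hre : ContinuousAt (fun w : ℂ => w.re) z := Complex.continuous_re.continuousAt
  have him : ContinuousAt (fun w : ℂ => w.im) z := Complex.continuous_im.continuousAt
  have hT : ContinuousAt (fun w : ℂ => w.re^2 + (w.im+1)^2) z :=
    (hre.pow 2).add ((him.add continuousAt_const).pow 2)
  have hS : ContinuousAt (fun w : ℂ => w.re^2 + w.im^2) z := (hre.pow 2).add (him.pow 2)
  have hlogT : ContinuousAt (fun w : ℂ => Real.log (w.re^2 + (w.im+1)^2)) z := hT.log ht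
  have hlogS : ContinuousAt (fun w : ℂ => Real.log (w.re^2 + w.im^2)) z := hS.log hs
  unfold b0R b1R
  exact ((hlogT.div_const 2).sub (hlogS.div_const 2)).add (hlogT.div_const 2)

/-! Boundary limits. -/

lemma continuous_ghat : Continuous ghat := by
  unfold ghat
  fun_prop

lemma Gf_tendsto_zero {x : ℝ} (hx : x ≠ 0) :
    Tendsto (fun z : ℂ => GfR z.re z.im) (𝓝[{z : ℂ | 0 < z.im}] (x:ℂ)) (𝓝 0) := by
  have hcongr : ∀ᶠ z in 𝓝[{z : ℂ | 0 < z.im}] (x:ℂ),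
      ghat (Complex.arg z) = GfR z.re z.im := by
    filter_upwards [self_mem_nhdsWithin] with z hz
    exact ghat_arg_eq_GfR hz
  have harg : Tendsto (fun z : ℂ => ghat (Complex.arg z))
      (𝓝[{z : ℂ | 0 < z.im}] (x:ℂ)) (𝓝 0) := by
    rcases hx.lt_or_gt with hneg | hpos
    · have h := Complex.tendsto_arg_nhdsWithin_im_nonneg_of_re_neg_of_im_zero
        (z := (x:ℂ)) (by simpa using hneg) (by simp)
      have h2 : Tendsto Complex.arg (𝓝[{z : ℂ | 0 < z.im}] (x:ℂ)) (𝓝 π) :=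
        h.mono_left (nhdsWithin_mono _ (fun z (hz : 0 < z.im) => le_of_lt hz))
      have h3 := continuous_ghat.continuousAt.tendsto.comp h2
      simpa [Function.comp_def, ghat, Real.sin_pi] using h3
    · have hslit : (x:ℂ) ∈ Complex.slitPlane := Or.inl (by simpa using hpos)
      have h := (Complex.continuousAt_arg hslit).tendsto.mono_left
        (nhdsWithin_le_nhds (s := {z : ℂ | 0 < z.im}))
      rw [Complex.arg_ofReal_of_nonneg hpos.le] at h
      have h3 := continuous_ghat.continuousAt.tendsto.comp h
      simpa [Function.comp_def, ghat] using h3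
  exact harg.congr' hcongr

lemma planeLaplacian_eq {f : ℂ → ℝ} {z : ℂ} {fx fy : ℝ → ℝ} {a b : ℝ}
    (hx : ∀ᶠ x in 𝓝 z.re, HasDerivAt (fun x : ℝ => f ((x:ℂ) + z.im * Complex.I)) (fx x) x)
    (hx2 : HasDerivAt fx a z.re)
    (hy : ∀ᶠ y in 𝓝 z.im, HasDerivAt (fun y : ℝ => f ((z.re:ℂ) + y * Complex.I)) (fy y) y)
    (hy2 : HasDerivAt fy b z.im) :
    planeLaplacian f z = a + b := by
  have h1 : deriv (fun x : ℝ => f ((x:ℂ) + z.im * Complex.I)) =ᶠ[𝓝 z.re] fx :=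
    hx.mono fun x h => h.deriv
  have h2 : deriv (fun y : ℝ => f ((z.re:ℂ) + y * Complex.I)) =ᶠ[𝓝 z.im] fy :=
    hy.mono fun y h => h.deriv
  rw [planeLaplacian, h1.deriv_eq, h2.deriv_eq, hx2.deriv, hy2.deriv]

/-- At a local max of `f`, the second derivative is nonpositive. -/
lemma second_deriv_nonpos_of_isLocalMax {f fx : ℝ → ℝ} {a D : ℝ}
    (h1 : ∀ᶠ x in 𝓝 a, HasDerivAt f (fx x) x) (h2 : HasDerivAt fx D a)
    (hmax : IsLocalMax f a) : D ≤ 0 := by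
  by_contra hD
  push_neg at hD
  have hfa : fx a = 0 := by
    have := hmax.deriv_eq_zero
    rwa [h1.self_of_nhds.deriv] at this
  -- positive slope of fx near a
  have hslope : ∀ᶠ x in 𝓝[≠] a, 0 < slope fx a x := by
    have := (hasDerivAt_iff_tendsto_slope.1 h2)
    exact this.eventually (eventually_gt_nhds hD)
  -- find a small interval
  obtain ⟨ε₁, hε₁, hball1⟩ := Metric.eventually_nhds_iff.1 (h1.and hmax)
  have hs2 : {x | x ≠ a → 0 < slope fx a x} ∈ 𝓝 a := by
    have := hslope
    rwa [eventually_nhdsWithin_iff] at this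
  obtain ⟨ε₂, hε₂, hball2⟩ := Metric.eventually_nhds_iff.1 hs2
  set ε := min ε₁ ε₂ with hε
  have hεpos : 0 < ε := lt_min hε₁ hε₂
  set b := a + ε / 2 with hb
  have hab : a < b := by simp [hb]; positivity
  have hsub : Set.Icc a b ⊆ Metric.ball a ε₁ ∩ Metric.ball a ε₂ := by
    intro x hx
    have hx2 : x ≤ a + ε / 2 := hb ▸ hx.2
    have h1 : |x - a| < ε := by
      rw [abs_of_nonneg (sub_nonneg.2 hx.1)]
      linarith
    constructor <;> simp only [Metric.mem_ball, Real.dist_eq] <;>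
      [exact lt_of_lt_of_le h1 (min_le_left _ _); exact lt_of_lt_of_le h1 (min_le_right _ _)]
  have hmono : StrictMonoOn f (Set.Icc a b) := by
    apply strictMonoOn_of_deriv_pos (convex_Icc a b)
    · intro x hx
      exact ((hball1 (by simpa [Real.dist_eq] using (hsub hx).1)).1).continuousAt.continuousWithinAt
    · intro x hx
      rw [interior_Icc] at hx
      have hxmem := hsub ⟨hx.1.le, hx.2.le⟩
      have hder := (hball1 (by simpa [Real.dist_eq] using hxmem.1)).1
      rw [hder.deriv]
      have hpos := hball2 (by simpa [Real.dist_eq] using hxmem.2) (ne_of_gt hx.1)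
      rw [slope_def_field, hfa, sub_zero] at hpos
      have hxa : 0 < x - a := sub_pos.2 hx.1
      have := hpos
      rw [div_pos_iff] at this
      rcases this with ⟨h, _⟩ | ⟨_, h⟩
      · exact h
      · linarith
  have hle : f b ≤ f a := (hball1 (by simp [Real.dist_eq, hb]; rw [abs_of_pos (by positivity)]; calc ε/2 < ε := by linarith
                                                                                                    _ ≤ ε₁ := min_le_left _ _)).2
  have := hmono (Set.left_mem_Icc.2 hab.le) (Set.right_mem_Icc.2 hab.le) hab
  linarith

lemma maxPrinciple {U : Set ℂ} (hUo : IsOpen U) (hUb2 : Bornology.IsBounded U) {B : ℝ}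
    (hUb : ∀ z ∈ U, z.re ^ 2 + z.im ^ 2 ≤ B)
    {v : ℂ → ℝ} {M : ℝ}
    (hcont : ∀ z ∈ U, ContinuousAt v z)
    (hbound : ∀ z ∈ U, v z ≤ M)
    (hpkg : ∀ z ∈ U, ∃ fx fy : ℝ → ℝ, ∃ a b : ℝ,
      (∀ᶠ x in 𝓝 z.re, HasDerivAt (fun x : ℝ => v ((x:ℂ) + z.im * Complex.I)) (fx x) x) ∧
      HasDerivAt fx a z.re ∧
      (∀ᶠ y in 𝓝 z.im, HasDerivAt (fun y : ℝ => v ((z.re:ℂ) + y * Complex.I)) (fy y) y) ∧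
      HasDerivAt fy b z.im ∧ 0 ≤ a + b)
    (hfr : ∀ p ∈ frontier U, ∀ c : ℝ, 0 < c → ∀ᶠ z in 𝓝[U] p, v z ≤ c) :
    ∀ z ∈ U, v z ≤ 0 := by
  intro z₀ hz₀
  have hB0 : 0 ≤ B := le_trans (by positivity) (hUb z₀ hz₀)
  have key : ∀ ε : ℝ, 0 < ε → v z₀ ≤ ε * B := by
    intro ε hε
    set w : ℂ → ℝ := fun z => v z + ε * (z.re ^ 2 + z.im ^ 2) with hw
    set S := sSup (w '' U) with hS
    have hne : (w '' U).Nonempty := ⟨w z₀, ⟨z₀, hz₀, rfl⟩⟩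
    have hbdd : BddAbove (w '' U) := by
      refine ⟨M + ε * B, ?_⟩
      rintro _ ⟨z, hz, rfl⟩
      have h1 := hbound z hz
      have h2 := hUb z hz
      simp only [hw]
      nlinarith
    obtain ⟨sq, _, hsqtend, hsqmem⟩ := exists_seq_tendsto_sSup hne hbdd
    choose zs hzsU hzsw using fun n => hsqmem n
    have hcomp : IsCompact (closure U) := hUb2.isCompact_closure
    obtain ⟨p, hpcl, φ, hφ, hφtend⟩ := hcomp.tendsto_subseq (fun n => subset_closure (hzsU n))
    have hwtend : Tendsto (fun n => w (zs (φ n))) atTop (𝓝 S) := by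
      have h := hsqtend.comp hφ.tendsto_atTop
      refine h.congr fun n => ?_
      simp only [Function.comp_apply, hzsw]
    have hSle : S ≤ ε * B := by
      by_cases hpU : p ∈ U
      · exfalso
        have hwc : ContinuousAt w p := by
          apply (hcont p hpU).add
          fun_prop
        have hwp : w p = S := tendsto_nhds_unique (hwc.tendsto.comp hφtend) hwtend
        have hmax : IsLocalMax w p := by
          have hUmem : U ∈ 𝓝 p := hUo.mem_nhds hpU
          filter_upwards [hUmem] with z hz
          rw [hwp]
          exact le_csSup hbdd ⟨z, hz, rfl⟩
        obtain ⟨fx, fy, a, b, h1, h2, h3, h4, h5⟩ := hpkg p hpU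
        -- x-slice
        have hLx : Tendsto (fun x : ℝ => ((x:ℂ) + p.im * Complex.I)) (𝓝 p.re) (𝓝 p) := by
          have hc : Continuous (fun x : ℝ => ((x:ℂ) + p.im * Complex.I)) := by fun_prop
          have h := hc.tendsto p.re
          rwa [Complex.re_add_im] at h
        have hmx : IsLocalMax (fun x : ℝ => w ((x:ℂ) + p.im * Complex.I)) p.re := by
          have := hLx.eventually hmax
          filter_upwards [this] with x hx
          simpa only [Complex.re_add_im] using hx
        have hslicex : (fun x : ℝ => w ((x:ℂ) + p.im * Complex.I)) =
            fun x : ℝ => v ((x:ℂ) + p.im * Complex.I) + ε * (x ^ 2 + p.im ^ 2) := by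
          funext x
          simp [hw]
        have hwx : ∀ᶠ x in 𝓝 p.re, HasDerivAt (fun x : ℝ => w ((x:ℂ) + p.im * Complex.I))
            (fx x + ε * (2 * x)) x := by
          filter_upwards [h1] with x hx
          rw [hslicex]
          exact hx.add (by simpa using ((hasDerivAt_pow 2 x).add_const (p.im ^ 2)).const_mul ε)
        have hDx : HasDerivAt (fun x => fx x + ε * (2 * x)) (a + ε * 2) p.re :=
          h2.add (by simpa using ((hasDerivAt_id p.re).const_mul 2).const_mul ε)
        have hax : a + ε * 2 ≤ 0 := second_deriv_nonpos_of_isLocalMax hwx hDx hmx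
        -- y-slice
        have hLy : Tendsto (fun y : ℝ => ((p.re:ℂ) + y * Complex.I)) (𝓝 p.im) (𝓝 p) := by
          have hc : Continuous (fun y : ℝ => ((p.re:ℂ) + y * Complex.I)) := by fun_prop
          have h := hc.tendsto p.im
          rwa [Complex.re_add_im] at h
        have hmy : IsLocalMax (fun y : ℝ => w ((p.re:ℂ) + y * Complex.I)) p.im := by
          have := hLy.eventually hmax
          filter_upwards [this] with y hy
          simpa only [Complex.re_add_im] using hy
        have hslicey : (fun y : ℝ => w ((p.re:ℂ) + y * Complex.I)) =
            fun y : ℝ => v ((p.re:ℂ) + y * Complex.I) + ε * (p.re ^ 2 + y ^ 2) := by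
          funext y
          simp [hw]
        have hwy : ∀ᶠ y in 𝓝 p.im, HasDerivAt (fun y : ℝ => w ((p.re:ℂ) + y * Complex.I))
            (fy y + ε * (2 * y)) y := by
          filter_upwards [h3] with y hy
          rw [hslicey]
          refine hy.add ?_
          have := ((hasDerivAt_pow 2 y).const_add (p.re ^ 2)).const_mul ε
          simpa using this
        have hDy : HasDerivAt (fun y => fy y + ε * (2 * y)) (b + ε * 2) p.im :=
          h4.add (by simpa using ((hasDerivAt_id p.im).const_mul 2).const_mul ε)
        have hay : b + ε * 2 ≤ 0 := second_deriv_nonpos_of_isLocalMax hwy hDy hmy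
        linarith
      · have hpfr : p ∈ frontier U := by
          rw [frontier, hUo.interior_eq]
          exact ⟨hpcl, hpU⟩
        have hallc : ∀ c : ℝ, 0 < c → S ≤ c + ε * B := by
          intro c hc
          have hev := hfr p hpfr c hc
          have htendW : Tendsto (fun n => zs (φ n)) atTop (𝓝[U] p) := by
            rw [tendsto_nhdsWithin_iff]
            exact ⟨hφtend, Eventually.of_forall fun n => hzsU (φ n)⟩
          have hevn : ∀ᶠ n in atTop, w (zs (φ n)) ≤ c + ε * B := by
            filter_upwards [htendW.eventually hev] with n hn
            have h2 := hUb _ (hzsU (φ n))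
            simp only [hw]
            nlinarith
          exact le_of_tendsto hwtend hevn
        by_contra hcon
        push_neg at hcon
        have := hallc ((S - ε * B) / 2) (by linarith)
        linarith
    have h1 : w z₀ ≤ S := le_csSup hbdd ⟨z₀, hz₀, rfl⟩
    have h2 : v z₀ ≤ w z₀ := by
      simp only [hw]
      nlinarith [sq_nonneg z₀.re, sq_nonneg z₀.im]
    linarith
  by_contra h
  push_neg at h
  have := key (v z₀ / (2 * (B + 1))) (by positivity)
  rw [div_mul_eq_mul_div, le_div_iff₀ (by positivity)] at this
  nlinarith [mul_pos h (show (0:ℝ) < B + 2 by linarith)]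

/-- The uniqueness characterization of the bounded solution to the Poisson–Dirichlet
problem (4.22) in Lemma 4.6 for `(Ω; x₁, x₃) = (ℍ; 0, ∞)`: any bounded `C²` function `g`
on the upper half-plane with `−Δg = (4/3) q` and vanishing boundary values on `ℝ \ {0}`
equals the explicit function `ĝ(arg z)`. -/
theorem poisson_dirichlet_unique (g : ℂ → ℝ)
    (hbdd : ∃ C : ℝ, ∀ z ∈ {z : ℂ | 0 < z.im}, |g z| ≤ C)
    (hC2 : ContDiffOn ℝ 2 g {z : ℂ | 0 < z.im})
    (hpde : ∀ z ∈ {z : ℂ | 0 < z.im}, -planeLaplacian g z = 4 / 3 * qDensity z)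
    (hbdry : ∀ x : ℝ, x ≠ 0 →
      Tendsto g (nhdsWithin (x : ℂ) {z : ℂ | 0 < z.im}) (nhds 0)) :
    ∀ z ∈ {z : ℂ | 0 < z.im}, g z = ghat (Complex.arg z) := by
  obtain ⟨C, hC⟩ := hbdd
  intro z₀ hz₀
  have hz₀im : 0 < z₀.im := hz₀
  have hopen : IsOpen {z : ℂ | 0 < z.im} := isOpen_lt continuous_const Complex.continuous_im
  have hC0 : 0 ≤ C := le_trans (abs_nonneg _) (hC z₀ hz₀)
  set M : ℝ := C + CGbound + 1 with hM
  have hM1 : 1 ≤ M := by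
    have := CGbound_nonneg
    rw [hM]; linarith
  have hMpos : 0 < M := by linarith
  have hu_bdd : ∀ z ∈ {z : ℂ | 0 < z.im}, |g z - GfR z.re z.im| ≤ M - 1 := by
    intro z hz
    have h1 := hC z hz
    have h2 := abs_GfR_le (hz : 0 < z.im)
    have h3 : |g z - GfR z.re z.im| ≤ |g z| + |GfR z.re z.im| := abs_sub _ _
    rw [hM]; linarith
  have key : ∀ δ : ℝ, 0 < δ → ∀ σ : ℝ, σ = 1 ∨ σ = -1 →
      σ * (g z₀ - GfR z₀.re z₀.im) ≤ δ * (b0R z₀.re z₀.im + b1R z₀.re z₀.im) := by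
    intro δ hδ σ hσ
    have hσabs : ∀ t : ℝ, σ * t ≤ |t| := by
      intro t
      rcases hσ with h | h <;> rw [h]
      · simpa using le_abs_self t
      · simpa using neg_le_abs t
    set R : ℝ := max (2 * Real.exp (M / δ)) (2 * (‖z₀‖ + 1)) with hR
    have hRz : ‖z₀‖ < R := by
      have h1 : ‖z₀‖ < 2 * (‖z₀‖ + 1) := by
        nlinarith [norm_nonneg z₀]
      exact lt_of_lt_of_le h1 (le_max_right _ _)
    have hRpos : 0 < R := lt_of_le_of_lt (norm_nonneg z₀) hRz
    have hRlog : M / δ ≤ Real.log (R / 2) := by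
      rw [Real.le_log_iff_exp_le (by positivity)]
      have := le_max_left (2 * Real.exp (M / δ)) (2 * (‖z₀‖ + 1))
      rw [← hR] at this
      linarith
    set U : Set ℂ := {z : ℂ | 0 < z.im} ∩ Metric.ball 0 R with hUdef
    set v : ℂ → ℝ :=
      fun z => σ * (g z - GfR z.re z.im) - δ * (b0R z.re z.im + b1R z.re z.im) with hv
    have hUsub : U ⊆ {z : ℂ | 0 < z.im} := Set.inter_subset_left
    have habs_mem : ∀ z ∈ U, ‖z‖ < R := by
      intro z hz
      have := hz.2
      rwa [Metric.mem_ball, Complex.dist_eq, sub_zero] at this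
    have hUo : IsOpen U := hopen.inter Metric.isOpen_ball
    have hUb2 : Bornology.IsBounded U := Metric.isBounded_ball.subset Set.inter_subset_right
    have hUb : ∀ z ∈ U, z.re ^ 2 + z.im ^ 2 ≤ R ^ 2 := by
      intro z hz
      have h1 : ‖z‖ ≤ R := (habs_mem z hz).le
      have h2 : ‖z‖ ^ 2 = z.re ^ 2 + z.im ^ 2 := by
        rw [Complex.sq_norm, Complex.normSq_apply]; ring
      nlinarith [norm_nonneg z]
    have hgc : ∀ z ∈ U, ContinuousAt g z := by
      intro z hz
      exact (hC2.continuousOn.continuousAt (hopen.mem_nhds (hUsub hz)))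
    have hcont : ∀ z ∈ U, ContinuousAt v z := by
      intro z hz
      exact ((continuousAt_const.mul ((hgc z hz).sub (continuousAt_GfR (hUsub hz)))).sub
        (continuousAt_const.mul (continuousAt_b0b1 (hUsub hz))))
    have hbound : ∀ z ∈ U, v z ≤ M := by
      intro z hz
      have h1 := hu_bdd z (hUsub hz)
      have h2 := b0_nonneg (hUsub hz : 0 < z.im)
      have h3 := b1_nonneg (hUsub hz : 0 < z.im)
      have h4 := hσabs (g z - GfR z.re z.im)
      have h5 : 0 ≤ δ * (b0R z.re z.im + b1R z.re z.im) := by positivity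
      simp only [hv]
      linarith
    have hpkg : ∀ z ∈ U, ∃ fx fy : ℝ → ℝ, ∃ a b : ℝ,
        (∀ᶠ x in 𝓝 z.re, HasDerivAt (fun x : ℝ => v ((x:ℂ) + z.im * Complex.I)) (fx x) x) ∧
        HasDerivAt fx a z.re ∧
        (∀ᶠ y in 𝓝 z.im, HasDerivAt (fun y : ℝ => v ((z.re:ℂ) + y * Complex.I)) (fy y) y) ∧
        HasDerivAt fy b z.im ∧ 0 ≤ a + b := by
      intro z hz
      have hzim : 0 < z.im := hUsub hz
      -- x-slice of g
      set φx : ℝ → ℝ := fun x : ℝ => g ((x:ℂ) + z.im * Complex.I) with hφx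
      have hιx : ContDiff ℝ 2 (fun x : ℝ => (x:ℂ) + (z.im:ℂ) * Complex.I) :=
        (Complex.ofRealCLM.contDiff.add contDiff_const).of_le le_top
      have hφxC : ContDiff ℝ 2 φx := by
        rw [← contDiffOn_univ]
        refine hC2.comp hιx.contDiffOn ?_
        intro x _
        simp [Set.mem_setOf_eq, hzim]
      have h2x := contDiff_succ_iff_deriv.1 (by
        rw [show ((1:ℕ∞) + 1 : WithTop ℕ∞) = 2 by norm_cast] ; exact hφxC :
        ContDiff ℝ ((1:ℕ∞) + 1) φx)
      have hdiffx : Differentiable ℝ φx := h2x.1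
      have hdiffx2 : Differentiable ℝ (deriv φx) := h2x.2.2.differentiable (by simp)
      -- y-slice of g
      set φy : ℝ → ℝ := fun y : ℝ => g ((z.re:ℂ) + y * Complex.I) with hφy
      have hιy : ContDiff ℝ 2 (fun y : ℝ => ((z.re:ℂ) + (y:ℂ) * Complex.I)) :=
        (contDiff_const.add (Complex.ofRealCLM.contDiff.mul contDiff_const)).of_le le_top
      have hφyC : ContDiffOn ℝ 2 φy (Set.Ioi 0) := by
        refine hC2.comp hιy.contDiffOn ?_
        intro y hy
        simpa [Set.mem_setOf_eq] using (hy : (0:ℝ) < y)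
      have h2y := (contDiffOn_succ_iff_deriv_of_isOpen isOpen_Ioi).1 (by
        rw [show ((1:ℕ∞) + 1 : WithTop ℕ∞) = 2 by norm_cast] ; exact hφyC :
        ContDiffOn ℝ ((1:ℕ∞) + 1) φy (Set.Ioi 0))
      have hdiffy : DifferentiableOn ℝ φy (Set.Ioi 0) := h2y.1
      have hdiffy2 : DifferentiableOn ℝ (deriv φy) (Set.Ioi 0) :=
        h2y.2.2.differentiableOn (by simp)
      have hIoi : Set.Ioi (0:ℝ) ∈ 𝓝 z.im := isOpen_Ioi.mem_nhds hzim
      -- slices of v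
      have hslice_x : (fun x : ℝ => v ((x:ℂ) + z.im * Complex.I)) =
          fun x : ℝ => σ * (φx x - GfR x z.im) - δ * (b0R x z.im + b1R x z.im) := by
        funext x
        simp only [hv, hφx]
        norm_num
      have hslice_y : (fun y : ℝ => v ((z.re:ℂ) + y * Complex.I)) =
          fun y : ℝ => σ * (φy y - GfR z.re y) - δ * (b0R z.re y + b1R z.re y) := by
        funext y
        simp only [hv, hφy]
        norm_num
      refine ⟨fun x => σ * (deriv φx x - GX x z.im) -
          δ * ((x/(x^2+(z.im+1)^2) - x/(x^2+z.im^2)) + x/(x^2+(z.im+1)^2)),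
        fun y => σ * (deriv φy y - GY z.re y) -
          δ * (((y+1)/(z.re^2+(y+1)^2) - y/(z.re^2+y^2)) + (y+1)/(z.re^2+(y+1)^2)),
        σ * (deriv (deriv φx) z.re - GXX z.re z.im) -
          δ * ((((z.im+1)^2 - z.re^2)/(z.re^2+(z.im+1)^2)^2 -
            (z.im^2 - z.re^2)/(z.re^2+z.im^2)^2) +
            ((z.im+1)^2 - z.re^2)/(z.re^2+(z.im+1)^2)^2),
        σ * (deriv (deriv φy) z.im - GYY z.re z.im) -
          δ * (((z.re^2 - (z.im+1)^2)/(z.re^2+(z.im+1)^2)^2 -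
            (z.re^2 - z.im^2)/(z.re^2+z.im^2)^2) +
            (z.re^2 - (z.im+1)^2)/(z.re^2+(z.im+1)^2)^2),
        ?_, ?_, ?_, ?_, ?_⟩
      · rw [hslice_x]
        refine Eventually.of_forall fun x => ?_
        have ht : x^2+(z.im+1)^2 ≠ 0 := by positivity
        have hs : x^2+z.im^2 ≠ 0 := by positivity
        have hb0 : HasDerivAt (fun x : ℝ => b0R x z.im)
            (x/(x^2+(z.im+1)^2) - x/(x^2+z.im^2)) x := by
          simpa [b0R] using (hasDerivAt_log_sq_half x ht).fun_sub (hasDerivAt_log_sq_half x hs)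
        have hb1 : HasDerivAt (fun x : ℝ => b1R x z.im) (x/(x^2+(z.im+1)^2)) x := by
          simpa [b1R] using hasDerivAt_log_sq_half x ht
        exact (((hdiffx x).hasDerivAt.sub (hasDerivAt_GfR_x hzim x)).const_mul σ).sub
          ((hb0.add hb1).const_mul δ)
      · have ht : z.re^2+(z.im+1)^2 ≠ 0 := by positivity
        have hs : z.re^2+z.im^2 ≠ 0 := by positivity
        exact (((hdiffx2 z.re).hasDerivAt.sub (hasDerivAt_GX_x hzim z.re)).const_mul σ).sub
          ((((hasDerivAt_inv_quad z.re ht).sub (hasDerivAt_inv_quad z.re hs)).add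
            (hasDerivAt_inv_quad z.re ht)).const_mul δ)
      · rw [hslice_y]
        filter_upwards [hIoi] with y hy
        have hy0 : 0 < y := hy
        have ht : z.re^2+(y+1)^2 ≠ 0 := by positivity
        have hs : z.re^2+y^2 ≠ 0 := by positivity
        have hb0 : HasDerivAt (fun y : ℝ => b0R z.re y)
            ((y+1)/(z.re^2+(y+1)^2) - y/(z.re^2+y^2)) y := by
          simpa [b0R] using (hasDerivAt_log_shift_y ht).fun_sub (hasDerivAt_log_sq_half_y hs)
        have hb1 : HasDerivAt (fun y : ℝ => b1R z.re y) ((y+1)/(z.re^2+(y+1)^2)) y := by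
          simpa [b1R] using hasDerivAt_log_shift_y ht
        have hgy : HasDerivAt φy (deriv φy y) y :=
          ((hdiffy y hy).differentiableAt (isOpen_Ioi.mem_nhds hy)).hasDerivAt
        exact ((hgy.sub (hasDerivAt_GfR_y hy0)).const_mul σ).sub
          ((hb0.add hb1).const_mul δ)
      · have ht : z.re^2+(z.im+1)^2 ≠ 0 := by positivity
        have hs : z.re^2+z.im^2 ≠ 0 := by positivity
        have hgy2 : HasDerivAt (deriv φy) (deriv (deriv φy) z.im) z.im :=
          ((hdiffy2 z.im hzim).differentiableAt (isOpen_Ioi.mem_nhds hzim)).hasDerivAt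
        exact ((hgy2.sub (hasDerivAt_GY_y hzim)).const_mul σ).sub
          ((((hasDerivAt_shift_quad_y ht).sub (hasDerivAt_quad_y hs)).add
            (hasDerivAt_shift_quad_y ht)).const_mul δ)
      · have hq : deriv (deriv φx) z.re + deriv (deriv φy) z.im
            = GXX z.re z.im + GYY z.re z.im := by
          have h1 : -planeLaplacian g z = 4/3 * qDensity z := hpde z (hUsub hz)
          have h2 : planeLaplacian g z = deriv (deriv φx) z.re + deriv (deriv φy) z.im := rfl
          have h3 := lapG_eq_neg_q hzim
          rw [h3]
          linarith
        have ht : z.re^2+(z.im+1)^2 ≠ 0 := by positivity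
        have hs : z.re^2+z.im^2 ≠ 0 := by positivity
        have : σ * (deriv (deriv φx) z.re - GXX z.re z.im) -
          δ * ((((z.im+1)^2 - z.re^2)/(z.re^2+(z.im+1)^2)^2 -
            (z.im^2 - z.re^2)/(z.re^2+z.im^2)^2) +
            ((z.im+1)^2 - z.re^2)/(z.re^2+(z.im+1)^2)^2) +
          (σ * (deriv (deriv φy) z.im - GYY z.re z.im) -
          δ * (((z.re^2 - (z.im+1)^2)/(z.re^2+(z.im+1)^2)^2 -
            (z.re^2 - z.im^2)/(z.re^2+z.im^2)^2) +
            (z.re^2 - (z.im+1)^2)/(z.re^2+(z.im+1)^2)^2)) = 0 := by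
          linear_combination σ * hq
        linarith [this]
    have hfr : ∀ p ∈ frontier U, ∀ c : ℝ, 0 < c → ∀ᶠ z in 𝓝[U] p, v z ≤ c := by
      intro p hp c hc
      have hpcl : p ∈ closure U := frontier_subset_closure hp
      have hpnotU : p ∉ U := by
        rw [frontier, hUo.interior_eq] at hp
        exact hp.2
      have hpim : 0 ≤ p.im := by
        have hsub : closure U ⊆ {z : ℂ | 0 ≤ z.im} := closure_minimal
          (fun z hz => show (0:ℝ) ≤ z.im from le_of_lt (hUsub hz))
          (isClosed_le continuous_const Complex.continuous_im)
        exact hsub hpcl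
      rcases hpim.lt_or_eq with hpim' | hpim'
      · -- interior arc: |p| = R
        have hpball : ‖p‖ ≤ R := by
          have hsub : closure U ⊆ Metric.closedBall 0 R := closure_minimal
            (fun z hz => Metric.ball_subset_closedBall hz.2) Metric.isClosed_closedBall
          have := hsub hpcl
          rwa [Metric.mem_closedBall, Complex.dist_eq, sub_zero] at this
        have habsp : ‖p‖ = R := by
          refine le_antisymm hpball ?_
          by_contra h
          push_neg at h
          exact hpnotU ⟨hpim', by rwa [Metric.mem_ball, Complex.dist_eq, sub_zero]⟩
        have hev : ∀ᶠ z : ℂ in 𝓝 p, R/2 < ‖z‖ := by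
          have h1 : R/2 < ‖p‖ := by rw [habsp]; linarith
          exact continuous_norm.continuousAt.eventually (eventually_gt_nhds h1)
        filter_upwards [eventually_nhdsWithin_of_eventually_nhds hev,
          self_mem_nhdsWithin] with z hzabs hzU
        have hz1 : 0 < z.im := hUsub hzU
        have h1 := hu_bdd z hz1
        have hb0 := b0_nonneg hz1
        have hb1log := b1_ge_log_abs hz1
        have h3 : Real.log (R/2) ≤ Real.log (‖z‖) :=
          Real.log_le_log (by positivity) hzabs.le
        have hb1 : M/δ ≤ b1R z.re z.im := by linarith
        have h5 : M ≤ δ * b1R z.re z.im := by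
          have := mul_le_mul_of_nonneg_left hb1 hδ.le
          rwa [mul_div_cancel₀ M hδ.ne'] at this
        have h4 := hσabs (g z - GfR z.re z.im)
        simp only [hv]
        nlinarith [hδ]
      · -- boundary segment
        by_cases hpre : p.re = 0
        · have hp0 : p = 0 := Complex.ext hpre hpim'.symm
          have hev : ∀ᶠ z : ℂ in 𝓝 p, ‖z‖ < Real.exp (-(M/δ)) := by
            rw [hp0]
            have h0 : ‖(0:ℂ)‖ < Real.exp (-(M/δ)) := by
              simp [Real.exp_pos]
            exact continuous_norm.continuousAt.eventually (eventually_lt_nhds h0)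
          filter_upwards [eventually_nhdsWithin_of_eventually_nhds hev,
            self_mem_nhdsWithin] with z hzabs hzU
          have hz1 : 0 < z.im := hUsub hzU
          have hzne : z ≠ 0 := by
            intro h
            rw [h] at hz1
            simp at hz1
          have hzabs0 : 0 < ‖z‖ := norm_pos_iff.mpr hzne
          have hlog : Real.log (‖z‖) ≤ -(M/δ) := by
            have := Real.log_le_log hzabs0 hzabs.le
            rwa [Real.log_exp] at this
          have hb0 := b0_ge_neg_log_abs hz1
          have hb1 := b1_nonneg hz1
          have h1 := hu_bdd z hz1
          have h4 := hσabs (g z - GfR z.re z.im)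
          have hb0' : M/δ ≤ b0R z.re z.im := by linarith
          have h5 : M ≤ δ * b0R z.re z.im := by
            have := mul_le_mul_of_nonneg_left hb0' hδ.le
            rwa [mul_div_cancel₀ M hδ.ne'] at this
          simp only [hv]
          nlinarith [hδ]
        · have hpcast : ((p.re : ℝ) : ℂ) = p := Complex.ext (by simp) (by simp [hpim'.symm])
          have hgten := hbdry p.re hpre
          have hGften := Gf_tendsto_zero hpre
          rw [hpcast] at hgten hGften
          have hu_t : Tendsto (fun z : ℂ => σ * (g z - GfR z.re z.im))
              (𝓝[{z : ℂ | 0 < z.im}] p) (𝓝 0) := by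
            have h := (hgten.sub hGften).const_mul σ
            simpa using h
          have hu_t2 : Tendsto (fun z : ℂ => σ * (g z - GfR z.re z.im)) (𝓝[U] p) (𝓝 0) :=
            hu_t.mono_left (nhdsWithin_mono _ hUsub)
          have hev := hu_t2.eventually (eventually_lt_nhds hc)
          filter_upwards [hev, self_mem_nhdsWithin] with z h1 hzU
          have hz1 : 0 < z.im := hUsub hzU
          have hb0 := b0_nonneg hz1
          have hb1 := b1_nonneg hz1
          have h5 : 0 ≤ δ * (b0R z.re z.im + b1R z.re z.im) := by positivity
          simp only [hv]
          linarith
    have hmem : z₀ ∈ U := ⟨hz₀, by rwa [Metric.mem_ball, Complex.dist_eq, sub_zero]⟩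
    have hfinal := maxPrinciple hUo hUb2 hUb hcont hbound hpkg hfr z₀ hmem
    simp only [hv] at hfinal
    linarith
  -- conclude
  have hK0 : 0 ≤ b0R z₀.re z₀.im + b1R z₀.re z₀.im :=
    add_nonneg (b0_nonneg hz₀) (b1_nonneg hz₀)
  set K := b0R z₀.re z₀.im + b1R z₀.re z₀.im with hK
  have hu0 : g z₀ - GfR z₀.re z₀.im = 0 := by
    by_contra h
    have ht : 0 < |g z₀ - GfR z₀.re z₀.im| := abs_pos.2 h
    set t := |g z₀ - GfR z₀.re z₀.im| with htdef
    have hKpos : 0 < 2*(K+1) := by linarith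
    have hδpos : 0 < t / (2*(K+1)) := by positivity
    have h1 := key (t / (2*(K+1))) hδpos 1 (Or.inl rfl)
    have h2 := key (t / (2*(K+1))) hδpos (-1) (Or.inr rfl)
    have habs : t ≤ t / (2*(K+1)) * K := by
      rcases le_or_gt 0 (g z₀ - GfR z₀.re z₀.im) with hpos | hneg
      · have heq : t = g z₀ - GfR z₀.re z₀.im := by
          rw [htdef]
          exact abs_of_nonneg hpos
        linarith [h1]
      · have heq : t = -(g z₀ - GfR z₀.re z₀.im) := by
          rw [htdef]
          exact abs_of_neg hneg
        linarith [h2]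
    rw [div_mul_eq_mul_div] at habs
    have h3 : t * (2*(K+1)) ≤ t*K := (le_div_iff₀ hKpos).1 habs
    have h4 : 0 ≤ t*K := mul_nonneg ht.le hK0
    nlinarith
  rw [ghat_arg_eq_GfR hz₀]
  linarith
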